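/- Let p, q, x be real with 0 < |x-p| < |x-q|, and fix t > 0. For ε > 0 set P_ε = |x-p|/√(2tε) and Q_ε = |x-q|/√(2tε). Then erfc(P_ε)/erfc(Q_ε) → ∞ as ε → 0⁺ (i.e. tends to +∞ in the sense of Filter.atTop). -/

import Mathlib

open MeasureTheory Real Set Filter

noncomputable def erfc (z : ℝ) : ℝ := ∫ s in Set.Ioi z, Real.exp (-s^2)

lemma int_exp : Integrable (fun s : ℝ => Real.exp (-s^2)) := by
  simpa using integrable_exp_neg_mul_sq (one_pos)

lemma int_mul_exp : Integrable (fun s : ℝ => s * Real.exp (-s^2)) := by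
  simpa using integrable_mul_exp_neg_mul_sq (one_pos)

lemma neg_sq_atBot : Tendsto (fun x : ℝ => -x^2) atTop atBot := by
  simpa using (tendsto_pow_atTop (two_ne_zero)).neg_const_mul (c := (-1:ℝ)) (by norm_num)

lemma integral_mul_exp (z : ℝ) :
    ∫ s in Set.Ioi z, s * Real.exp (-s^2) = Real.exp (-z^2) / 2 := by
  have hderiv : ∀ x ∈ Set.Ici z, HasDerivAt (fun x : ℝ => -Real.exp (-x^2) / 2)
      (x * Real.exp (-x^2)) x := by
    intro x _
    have h : HasDerivAt (fun x : ℝ => -x^2) (-(2*x)) x := by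
      simpa [Pi.neg_def] using ((hasDerivAt_pow 2 x).neg)
    have := (h.exp).neg.div_const 2
    convert this using 1
    exacts [rfl, rfl, rfl, by ring]
  have htend : Tendsto (fun x : ℝ => -Real.exp (-x^2) / 2) atTop (nhds 0) := by
    have h2 := (Real.tendsto_exp_atBot.comp neg_sq_atBot).neg.div_const 2
    simpa using h2
  have := integral_Ioi_of_hasDerivAt_of_tendsto' hderiv int_mul_exp.integrableOn htend
  rw [this]; ring

lemma erfc_upper {z : ℝ} (hz : 0 < z) : erfc z ≤ Real.exp (-z^2) / (2*z) := by
  have hmono : ∀ s ∈ Set.Ioi z, Real.exp (-s^2) ≤ (s/z) * Real.exp (-s^2) := by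
    intro s hs
    have hs1 : (1:ℝ) ≤ s/z := (one_le_div hz).2 (le_of_lt hs)
    nlinarith [Real.exp_pos (-s^2)]
  have h1 : erfc z ≤ ∫ s in Set.Ioi z, (s/z) * Real.exp (-s^2) := by
    refine setIntegral_mono_on int_exp.integrableOn ?_ measurableSet_Ioi hmono
    have : Integrable (fun s : ℝ => (s * Real.exp (-s^2)) / z) := int_mul_exp.div_const z
    exact (this.integrableOn).congr_fun (fun s _ => by ring) measurableSet_Ioi
  calc erfc z ≤ _ := h1
    _ = (∫ s in Set.Ioi z, s * Real.exp (-s^2)) / z := by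
        rw [← integral_div]; congr 1; ext s; ring
    _ = Real.exp (-z^2) / (2*z) := by rw [integral_mul_exp]; ring

lemma erfc_lower {z : ℝ} (hz : 0 ≤ z) : Real.exp (-(z+1)^2) ≤ erfc z := by
  have h1 : ∫ s in Set.Ioc z (z+1), Real.exp (-(z+1)^2) ≤
      ∫ s in Set.Ioc z (z+1), Real.exp (-s^2) := by
    refine setIntegral_mono_on (integrableOn_const measure_Ioc_lt_top.ne)
      int_exp.integrableOn measurableSet_Ioc ?_
    intro s hs
    apply Real.exp_le_exp.2
    have h0 : 0 ≤ s := le_trans hz hs.1.le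
    nlinarith [hs.1, hs.2]
  have h2 : ∫ s in Set.Ioc z (z+1), Real.exp (-(z+1)^2) = Real.exp (-(z+1)^2) := by
    simp [Real.volume_Ioc]
  have h3 : ∫ s in Set.Ioc z (z+1), Real.exp (-s^2) ≤ erfc z := by
    apply setIntegral_mono_set int_exp.integrableOn
    · exact Filter.Eventually.of_forall (fun s => (Real.exp_pos _).le)
    · exact HasSubset.Subset.eventuallyLE (Set.Ioc_subset_Ioi_self)
  linarith [h1, h2 ▸ h1]

lemma erfc_pos (z : ℝ) : 0 < erfc z := by
  have := erfc_lower (le_max_right z 0)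
  have h2 : erfc (max z 0) ≤ erfc z := by
    apply setIntegral_mono_set int_exp.integrableOn
    · exact Filter.Eventually.of_forall (fun s => (Real.exp_pos _).le)
    · exact HasSubset.Subset.eventuallyLE (Set.Ioi_subset_Ioi (le_max_left z 0))
  linarith [Real.exp_pos (-(max z 0 + 1)^2)]

lemma key {a b : ℝ} (ha : 0 < a) (hab : a < b) :
    Tendsto (fun u : ℝ => erfc (a*u) / erfc (b*u)) atTop atTop := by
  have hb : 0 < b := lt_trans ha hab
  set g : ℝ → ℝ := fun u => (2*b*u) * Real.exp ((-(a*u+1)^2) - (-(b*u)^2)) with hg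
  have hgt : Tendsto g atTop atTop := by
    have h1 : Tendsto (fun u : ℝ => 2*b*u) atTop atTop :=
      Filter.Tendsto.const_mul_atTop (by positivity) tendsto_id
    have h3 : Tendsto (fun u : ℝ => (-(a*u+1)^2) - (-(b*u)^2)) atTop atTop := by
      have heq : (fun u : ℝ => (-(a*u+1)^2) - (-(b*u)^2))
          = fun u : ℝ => u * ((b^2-a^2)*u - 2*a) + (-1) := by funext u; ring
      rw [heq]
      apply Filter.tendsto_atTop_add_const_right
      apply Filter.Tendsto.atTop_mul_atTop₀ tendsto_id
      apply Filter.tendsto_atTop_add_const_right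
      exact Filter.Tendsto.const_mul_atTop (by nlinarith) tendsto_id
    exact Filter.Tendsto.atTop_mul_atTop₀ h1 (Real.tendsto_exp_atTop.comp h3)
  apply Filter.tendsto_atTop_mono' _ _ hgt
  filter_upwards [Filter.eventually_gt_atTop 0] with u hu
  have hau : 0 < a*u := by positivity
  have hbu : 0 < b*u := by positivity
  have hL := erfc_lower (le_of_lt hau)
  have hU := erfc_upper hbu
  have hD := erfc_pos (b*u)
  have hgeq : g u = Real.exp (-(a*u+1)^2) / (Real.exp (-(b*u)^2) / (2*(b*u))) := by
    simp only [hg, Real.exp_sub, div_div_eq_mul_div]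
    ring
  calc g u = _ := hgeq
    _ ≤ Real.exp (-(a*u+1)^2) / erfc (b*u) := by
        gcongr
    _ ≤ erfc (a*u) / erfc (b*u) := by gcongr

theorem erfc_ratio_tendsto_atTop (p q x t : ℝ) (hp : 0 < |x - p|)
    (hpq : |x - p| < |x - q|) (ht : 0 < t) :
    Filter.Tendsto
      (fun ε : ℝ => erfc (|x - p| / Real.sqrt (2 * t * ε)) / erfc (|x - q| / Real.sqrt (2 * t * ε)))
      (nhdsWithin 0 (Set.Ioi 0)) Filter.atTop := by
  have hcomp : Tendsto (fun ε : ℝ => (Real.sqrt (2*t*ε))⁻¹) (nhdsWithin 0 (Set.Ioi 0)) atTop := by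
    apply tendsto_inv_nhdsGT_zero.comp
    apply tendsto_nhdsWithin_of_tendsto_nhds_of_eventually_within
    · have hc : Continuous fun ε : ℝ => Real.sqrt (2*t*ε) := by fun_prop
      have h0 : Tendsto (fun ε : ℝ => Real.sqrt (2*t*ε)) (nhds 0) (nhds 0) := by
        simpa using hc.tendsto 0
      exact h0.mono_left nhdsWithin_le_nhds
    · filter_upwards [self_mem_nhdsWithin] with ε hε
      exact Real.sqrt_pos.2 (by have : (0:ℝ) < ε := hε; positivity)
  have := (key hp hpq).comp hcomp
  convert this using 2 with ε
  simp [Function.comp, div_eq_mul_inv]
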